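/- Let b : (0,∞) → [0,∞) satisfy, for some constants A > 0 and α > 0: t · b(s+t) ≤ A · b(s)^{1+α} for all s > 0, t ∈ [0,1], and b(s) ≤ c/s^{β} for some c, β > 0 and all s > 0 (so b decays). If moreover b is right-continuous and non-increasing, then there exists S, depending only on A, α, c, β, such that b(s) = 0 for all s > S. -/

import Mathlib

open Filter Set

/-- There is a threshold `S`, depending only on the constants `A, α, c, β`, beyond which
any function `b` satisfying the iteration inequality and the decay bound vanishes. -/
theorem stmt_8 :
    ∃ S : ℝ → ℝ → ℝ → ℝ → ℝ,
      ∀ (b : ℝ → ℝ) (A α c β : ℝ), 0 < A → 0 < α → 0 < c → 0 < β →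
        (∀ s, 0 < s → 0 ≤ b s) →
        (∀ s, 0 < s → ContinuousWithinAt b (Ici s) s) →
        AntitoneOn b (Ioi 0) →
        (∀ s, 0 < s → ∀ t, 0 ≤ t → t ≤ 1 → t * b (s + t) ≤ A * b s ^ (1 + α)) →
        (∀ s, 0 < s → b s ≤ c / s ^ β) →
        ∀ s, s > S A α c β → b s = 0 := by
  refine ⟨fun A α c β => max 1 ((c * (2*A)^(1/α))^(1/β)) + 1/(1 - (2:ℝ)^(-α)), ?_⟩
  intro b A α c β hA hα hc hβ hbnn hcont hmono hiter hdecay s hs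
  set s₀ : ℝ := max 1 ((c * (2*A)^(1/α))^(1/β)) with hs₀def
  have hs₀1 : (1:ℝ) ≤ s₀ := le_max_left _ _
  have hs₀pos : (0:ℝ) < s₀ := lt_of_lt_of_le one_pos hs₀1
  have h2A : (0:ℝ) < 2*A := by linarith
  set r : ℝ := (2:ℝ)^(-α) with hrdef
  have hr0 : 0 < r := Real.rpow_pos_of_pos (by norm_num) _
  have hr1 : r < 1 := Real.rpow_lt_one_of_one_lt_of_neg (by norm_num) (by linarith)
  -- the first threshold gives smallness of `b s₀`
  have hb0nn : 0 ≤ b s₀ := hbnn s₀ hs₀pos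
  have hb0 : b s₀ ≤ (2*A)^(-(1/α)) := by
    have h1 : b s₀ ≤ c / s₀ ^ β := hdecay s₀ hs₀pos
    have hx : c * (2*A)^(1/α) ≤ s₀ ^ β := by
      have h2 : (c * (2*A)^(1/α))^(1/β) ≤ s₀ := le_max_right _ _
      have hcc : (0:ℝ) ≤ c * (2*A)^(1/α) := by positivity
      have h3 : ((c * (2*A)^(1/α))^(1/β))^β ≤ s₀^β :=
        Real.rpow_le_rpow (Real.rpow_nonneg hcc _) h2 hβ.le
      rwa [← Real.rpow_mul hcc, one_div_mul_cancel hβ.ne', Real.rpow_one] at h3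
    have hs₀β : (0:ℝ) < s₀ ^ β := Real.rpow_pos_of_pos hs₀pos _
    refine h1.trans ?_
    rw [div_le_iff₀ hs₀β]
    have h4 : (2*A)^(-(1/α)) * (c * (2*A)^(1/α)) ≤ (2*A)^(-(1/α)) * s₀ ^ β :=
      mul_le_mul_of_nonneg_left hx (Real.rpow_nonneg h2A.le _)
    have h5 : (2*A)^(-(1/α)) * (c * (2*A)^(1/α)) = c := by
      rw [mul_comm c, ← mul_assoc, ← Real.rpow_add h2A, neg_add_cancel, Real.rpow_zero, one_mul]
    rw [h5] at h4
    linarith [h4]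
  -- key smallness: A * (b s₀)^α ≤ 1/2
  have hAb : A * (b s₀) ^ α ≤ 1/2 := by
    have h1 : (b s₀) ^ α ≤ ((2*A)^(-(1/α))) ^ α := Real.rpow_le_rpow hb0nn hb0 hα.le
    have h2 : ((2*A)^(-(1/α))) ^ α = (2*A)⁻¹ := by
      rw [← Real.rpow_mul h2A.le]
      rw [show -(1/α) * α = -1 by field_simp]
      exact Real.rpow_neg_one _
    rw [h2] at h1
    have := mul_le_mul_of_nonneg_left h1 hA.le
    calc A * (b s₀) ^ α ≤ A * (2*A)⁻¹ := this
      _ = 1/2 := by field_simp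
  -- the iteration sequence
  set sk : ℕ → ℝ := fun k => s₀ + ∑ j ∈ Finset.range k, r ^ j with hskdef
  have hskpos : ∀ k, 0 < sk k := by
    intro k
    have : 0 ≤ ∑ j ∈ Finset.range k, r ^ j :=
      Finset.sum_nonneg fun j _ => pow_nonneg hr0.le j
    simp only [hskdef]; linarith
  have hs₀le : ∀ k, s₀ ≤ sk k := by
    intro k
    have : 0 ≤ ∑ j ∈ Finset.range k, r ^ j :=
      Finset.sum_nonneg fun j _ => pow_nonneg hr0.le j
    simp only [hskdef]; linarith
  have hskle : ∀ k, sk k ≤ s₀ + 1/(1-r) := by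
    intro k
    have hgs : (∑ j ∈ Finset.range k, r ^ j) * (r - 1) = r ^ k - 1 := geom_sum_mul r k
    have hrk : 0 ≤ r ^ k := pow_nonneg hr0.le k
    have h1r : 0 < 1 - r := by linarith
    have : ∑ j ∈ Finset.range k, r ^ j ≤ 1/(1-r) := by
      rw [le_div_iff₀ h1r]; nlinarith
    simp only [hskdef]; linarith
  -- relate `(1/2)^k` powers to `r^k`
  have hhalf : ∀ k : ℕ, ((1/2:ℝ)^k) ^ α = r ^ k := by
    intro k
    have h1 : ((1/2:ℝ)^k : ℝ) = (2:ℝ)^(-(k:ℝ)) := by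
      rw [Real.rpow_neg (by norm_num : (0:ℝ) ≤ 2), Real.rpow_natCast]
      simp [one_div, inv_pow]
    rw [h1, ← Real.rpow_natCast r k, hrdef,
      ← Real.rpow_mul (by norm_num : (0:ℝ) ≤ 2), ← Real.rpow_mul (by norm_num : (0:ℝ) ≤ 2)]
    ring_nf
  -- main induction
  have hkey : ∀ k, b (sk k) ≤ b s₀ * (1/2)^k := by
    intro k
    induction k with
    | zero => simp [hskdef]
    | succ k ih =>
      have hrkpos : 0 < r ^ k := pow_pos hr0 k
      have hrkle1 : r ^ k ≤ 1 := pow_le_one₀ hr0.le hr1.le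
      have hstep := hiter (sk k) (hskpos k) (r ^ k) hrkpos.le hrkle1
      have hsucc : sk (k+1) = sk k + r ^ k := by
        simp [hskdef, Finset.sum_range_succ]; ring
      set x := b (sk k) with hxdef
      have hxnn : 0 ≤ x := hbnn _ (hskpos k)
      have hxpow : x ^ (1+α) = x * x ^ α := by
        rw [Real.rpow_add' hxnn (by positivity), Real.rpow_one]
      have hx2 : x ^ α ≤ (b s₀)^α * r ^ k := by
        have := Real.rpow_le_rpow hxnn ih hα.le
        rwa [Real.mul_rpow hb0nn (by positivity), hhalf k] at this
      -- bound the right-hand side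
      have hRHS : A * x ^ (1+α) ≤ r ^ k * (b s₀ * (1/2)^(k+1)) := by
        rw [hxpow]
        have h1 : x * x ^ α ≤ (b s₀ * (1/2)^k) * ((b s₀)^α * r ^ k) :=
          mul_le_mul ih hx2 (Real.rpow_nonneg hxnn _) (by positivity)
        have h2 : A * (x * x ^ α) ≤ A * ((b s₀ * (1/2)^k) * ((b s₀)^α * r ^ k)) :=
          mul_le_mul_of_nonneg_left h1 hA.le
        have h3 : A * ((b s₀ * (1/2)^k) * ((b s₀)^α * r ^ k))
            = (A * (b s₀)^α) * (b s₀ * ((1/2)^k * r ^ k)) := by ring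
        have h4 : (A * (b s₀)^α) * (b s₀ * ((1/2)^k * r ^ k))
            ≤ (1/2) * (b s₀ * ((1/2)^k * r ^ k)) :=
          mul_le_mul_of_nonneg_right hAb (by positivity)
        have h5 : (1/2:ℝ) * (b s₀ * ((1/2)^k * r ^ k)) = r ^ k * (b s₀ * (1/2)^(k+1)) := by
          rw [pow_succ]; ring
        linarith
      have := hstep.trans hRHS
      rw [← hsucc] at this
      exact le_of_mul_le_mul_left this hrkpos
  -- conclude
  have hspos : 0 < s := by
    have h1r : 0 < 1 - r := by linarith
    have : s₀ + 1/(1-r) < s := hs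
    have : 0 < 1/(1-r) := by positivity
    linarith
  have hle : ∀ k, b s ≤ b s₀ * (1/2)^k := by
    intro k
    refine le_trans ?_ (hkey k)
    exact hmono (mem_Ioi.2 (hskpos k)) (mem_Ioi.2 hspos)
      (le_of_lt (lt_of_le_of_lt (hskle k) hs))
  have htend : Tendsto (fun k : ℕ => b s₀ * (1/2:ℝ)^k) atTop (nhds 0) := by
    have h0 : Tendsto (fun k : ℕ => (1/2:ℝ)^k) atTop (nhds 0) :=
      tendsto_pow_atTop_nhds_zero_of_lt_one (by norm_num) (by norm_num)
    have := h0.const_mul (b s₀)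
    simpa using this
  have hbs : b s ≤ 0 := ge_of_tendsto' htend hle
  exact le_antisymm hbs (hbnn s hspos)
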